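/- Value of the 𝔰𝔬(N) weight system on the chord diagram p₂ with two crossing chords: in U(𝔰𝔬(N)) one has ∑_{i₁,i₂,i₃,i₄ : Fin N} ι(X i₁ i₃) · ι(X i₂ i₄) · ι(X i₃ i₁) · ι(X i₄ i₂) = C₂² − 2·N·C₂ + 4·C₂, where C₂ := ∑_{a,b} ι(X a b) · ι(X b a). -/

import Mathlib

open Matrix in
noncomputable section
open Matrix

attribute [local instance 100] LieRing.ofAssociativeRing

/-- The anti-diagonal identity matrix. -/
def soJ (N : ℕ) : Matrix (Fin N) (Fin N) ℂ := fun i j => if j = Fin.rev i then 1 else 0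

lemma soJ_mul (N : ℕ) (A : Matrix (Fin N) (Fin N) ℂ) (i j : Fin N) :
    (soJ N * A) i j = A (Fin.rev i) j := by
  simp [soJ, Matrix.mul_apply, Fin.rev_eq_iff]

lemma mul_soJ (N : ℕ) (A : Matrix (Fin N) (Fin N) ℂ) (i j : Fin N) :
    (A * soJ N) i j = A i (Fin.rev j) := by
  classical
  simp only [Matrix.mul_apply, soJ]
  rw [Finset.sum_eq_single (Fin.rev j)]
  · simp
  · intro b _ hb
    rw [if_neg, mul_zero]
    intro h
    exact hb (by rw [h, Fin.rev_rev])
  · simp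

/-- The Lie algebra 𝔰𝔬(N). -/
def soL (N : ℕ) : LieSubalgebra ℂ (Matrix (Fin N) (Fin N) ℂ) where
  carrier := {A | Aᵀ * soJ N = -(soJ N * A)}
  add_mem' := by
    intro A B hA hB
    simp only [Set.mem_setOf_eq] at *
    rw [Matrix.transpose_add, Matrix.add_mul, hA, hB, Matrix.mul_add, neg_add]
  zero_mem' := by
    simp [Set.mem_setOf_eq]
  smul_mem' := by
    intro c A hA
    simp only [Set.mem_setOf_eq] at *
    rw [Matrix.transpose_smul, Matrix.smul_mul, hA, Matrix.mul_smul, smul_neg]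
  lie_mem' := by
    intro A B hA hB
    simp only [Set.mem_setOf_eq] at *
    rw [Ring.lie_def, Matrix.transpose_sub, Matrix.transpose_mul, Matrix.transpose_mul,
      Matrix.sub_mul, Matrix.mul_assoc, Matrix.mul_assoc, hA, hB, Matrix.mul_neg,
      Matrix.mul_neg, ← Matrix.mul_assoc, ← Matrix.mul_assoc, hA, hB, Matrix.neg_mul,
      Matrix.neg_mul, neg_neg, neg_neg, Matrix.mul_sub, Matrix.mul_assoc, Matrix.mul_assoc]
    abel

/-- The generators X_{ab} of 𝔰𝔬(N), as matrices. -/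
def soXmat (N : ℕ) (a b : Fin N) : Matrix (Fin N) (Fin N) ℂ :=
  Matrix.single a b 1 - Matrix.single (Fin.rev b) (Fin.rev a) 1

lemma soXmat_mem (N : ℕ) (a b : Fin N) : soXmat N a b ∈ soL N := by
  change (soXmat N a b)ᵀ * soJ N = -(soJ N * soXmat N a b)
  ext i j
  rw [mul_soJ]
  simp only [Matrix.neg_apply, soJ_mul, soXmat, Matrix.sub_apply, Matrix.transpose_apply,
    Matrix.single, Matrix.of_apply]
  simp only [Fin.rev_inj, Fin.rev_eq_iff, neg_sub]
  simp [and_comm]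

/-- The generators of 𝔰𝔬(N) as elements of the Lie algebra. -/
def soX (N : ℕ) (a b : Fin N) : soL N := ⟨soXmat N a b, soXmat_mem N a b⟩

/-- The extension of the 𝔰𝔬(N) weight system to permutations. -/
def wso (N : ℕ) {m : ℕ} (s : Equiv.Perm (Fin m)) :
    UniversalEnvelopingAlgebra ℂ (soL N) :=
  ∑ i : Fin m → Fin N,
    (List.ofFn fun k : Fin m =>
      UniversalEnvelopingAlgebra.ι ℂ (soX N (i k) (i (s k)))).prod

/-- The second Casimir element C₂ of 𝔰𝔬(N). -/
def soC2 (N : ℕ) : UniversalEnvelopingAlgebra ℂ ↥(soL N) :=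
  ∑ a : Fin N, ∑ b : Fin N,
    UniversalEnvelopingAlgebra.ι ℂ (soX N a b) * UniversalEnvelopingAlgebra.ι ℂ (soX N b a)

/- ### Auxiliary lemmas -/

lemma Emul {N : ℕ} (a b c d : Fin N) :
    Matrix.single a b (1:ℂ) * Matrix.single c d 1 =
      if b = c then Matrix.single a d 1 else 0 := by
  split_ifs with h
  · subst h; simp
  · exact Matrix.single_mul_single_of_ne (c := (1:ℂ)) a b c h 1

lemma brakmat {N : ℕ} (a b c d : Fin N) :
    soXmat N a b * soXmat N c d - soXmat N c d * soXmat N a b =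
      (if b = c then soXmat N a d else 0) - (if a = d then soXmat N c b else 0)
      - (if b = Fin.rev d then soXmat N a (Fin.rev c) else 0)
      + (if a = Fin.rev c then soXmat N (Fin.rev d) b else 0) := by
  simp only [soXmat, sub_mul, mul_sub, Emul, Fin.rev_inj, Fin.rev_eq_iff, Fin.rev_rev,
    @eq_comm _ d a, @eq_comm _ c b, @eq_comm _ d (Fin.rev b), @eq_comm _ c (Fin.rev a)]
  split_ifs <;> abel

lemma soX_rev {N : ℕ} (a b : Fin N) : soX N (Fin.rev b) (Fin.rev a) = - soX N a b := by
  apply Subtype.ext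
  show soXmat N (Fin.rev b) (Fin.rev a) = -(soXmat N a b)
  simp [soXmat, Fin.rev_rev, neg_sub]

lemma soX_diag_sum {N : ℕ} : ∑ c : Fin N, soX N c c = 0 := by
  apply Subtype.ext
  push_cast
  show ∑ c : Fin N, soXmat N c c = 0
  simp only [soXmat]
  rw [Finset.sum_sub_distrib]
  rw [Fintype.sum_equiv Fin.revPerm (fun c => Matrix.single (Fin.rev c) (Fin.rev c) (1:ℂ))
    (fun c => Matrix.single c c (1:ℂ)) (fun c => by simp [Fin.revPerm])]
  simp

lemma brak {N : ℕ} (a b c d : Fin N) :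
    ⁅soX N a b, soX N c d⁆ =
      (if b = c then soX N a d else 0) - (if a = d then soX N c b else 0)
      - (if b = Fin.rev d then soX N a (Fin.rev c) else 0)
      + (if a = Fin.rev c then soX N (Fin.rev d) b else 0) := by
  apply Subtype.ext
  have h := brakmat (N := N) a b c d
  rw [LieSubalgebra.coe_bracket, Ring.lie_def]
  push_cast
  simp only [apply_ite (fun x : soL N => (x : Matrix (Fin N) (Fin N) ℂ)), ZeroMemClass.coe_zero]
  exact h

lemma sum_brak {N : ℕ} (a b : Fin N) :
    ∑ c : Fin N, ⁅soX N c a, soX N b c⁆ = ((2:ℂ) - (N:ℂ)) • soX N b a := by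
  simp only [brak, eq_self_iff_true, if_true]
  rw [Finset.sum_add_distrib, Finset.sum_sub_distrib, Finset.sum_sub_distrib]
  have h1 : ∑ c : Fin N, (if a = b then soX N c c else 0) = 0 := by
    rcases eq_or_ne a b with h | h
    · simp [h, soX_diag_sum]
    · simp [h]
  have h2 : ∑ _c : Fin N, soX N b a = (N : ℂ) • soX N b a := by
    simp [Finset.sum_const, Nat.cast_smul_eq_nsmul]
  have h3 : ∑ c : Fin N, (if a = Fin.rev c then soX N c (Fin.rev b) else 0)
      = - soX N b a := by
    simp only [← Fin.rev_eq_iff]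
    rw [Finset.sum_ite_eq]
    simp [soX_rev]
  have h4 : ∑ c : Fin N, (if (c : Fin N) = Fin.rev b then soX N (Fin.rev c) a else 0)
      = soX N b a := by
    rw [Finset.sum_ite_eq']
    simp [Fin.rev_rev]
  rw [h1, h2, h3, h4]
  module

section Ulevel
variable {N : ℕ}

local notation "ι" => UniversalEnvelopingAlgebra.ι ℂ (L := soL N)
local notation "x" => fun a b => UniversalEnvelopingAlgebra.ι ℂ (soX N a b)

lemma comm_U (a b c d : Fin N) :
    ι (soX N a b) * ι (soX N c d)
      = ι (soX N c d) * ι (soX N a b) + ι ⁅soX N a b, soX N c d⁆ := by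
  rw [LieHom.map_lie, Ring.lie_def]
  abel

lemma hrevU (a b : Fin N) :
    ι (soX N (Fin.rev b) (Fin.rev a)) = - ι (soX N a b) := by
  rw [soX_rev, map_neg]

lemma sum3_collapse {M : Type*} [AddCommMonoid M] (j : Fin N → Fin N)
    (g : Fin N → Fin N → Fin N → M) :
    (∑ a : Fin N, ∑ b : Fin N, ∑ c : Fin N, if a = j b then g a b c else 0)
      = ∑ b : Fin N, ∑ c : Fin N, g (j b) b c := by
  rw [Finset.sum_comm]
  refine Finset.sum_congr rfl fun b _ => ?_
  rw [Finset.sum_comm]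
  refine Finset.sum_congr rfl fun c _ => ?_
  simp

end Ulevel


section Main
variable {N : ℕ}

/-- Abbreviation for the generators inside the enveloping algebra. -/
noncomputable abbrev xx (N : ℕ) (a b : Fin N) : UniversalEnvelopingAlgebra ℂ ↥(soL N) :=
  UniversalEnvelopingAlgebra.ι ℂ (soX N a b)

lemma xx_rev (a b : Fin N) : xx N (Fin.rev b) (Fin.rev a) = - xx N a b := by
  show UniversalEnvelopingAlgebra.ι ℂ (soX N (Fin.rev b) (Fin.rev a)) = _
  rw [soX_rev, map_neg]

lemma xx_rev1 (a b : Fin N) : xx N a (Fin.rev b) = - xx N b (Fin.rev a) := by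
  have := xx_rev (N := N) b (Fin.rev a)
  rwa [Fin.rev_rev] at this

lemma xx_rev2 (a b : Fin N) : xx N (Fin.rev a) b = - xx N (Fin.rev b) a := by
  have := xx_rev (N := N) (Fin.rev b) a
  rwa [Fin.rev_rev] at this

lemma xx_comm (a b c d : Fin N) :
    xx N a b * xx N c d = xx N c d * xx N a b
      + ((if b = c then xx N a d else 0) - (if a = d then xx N c b else 0)
        - (if b = Fin.rev d then xx N a (Fin.rev c) else 0)
        + (if a = Fin.rev c then xx N (Fin.rev d) b else 0)) := by
  have h := comm_U (N := N) a b c d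
  rw [brak] at h
  rw [map_add, map_sub, map_sub] at h
  simpa only [apply_ite (UniversalEnvelopingAlgebra.ι ℂ (L := soL N)), map_zero] using h

lemma xx_point (i₁ i₂ i₃ i₄ : Fin N) :
    xx N i₁ i₃ * xx N i₂ i₄ * xx N i₃ i₁ * xx N i₄ i₂
      = (xx N i₁ i₃ * xx N i₃ i₁) * (xx N i₂ i₄ * xx N i₄ i₂)
        + ((if i₄ = i₃ then xx N i₁ i₃ * xx N i₂ i₁ * xx N i₄ i₂ else 0)
          - (if i₂ = i₁ then xx N i₁ i₃ * xx N i₃ i₄ * xx N i₄ i₂ else 0)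
          - (if i₄ = Fin.rev i₁ then xx N i₁ i₃ * xx N i₂ (Fin.rev i₃) * xx N i₄ i₂ else 0)
          + (if i₂ = Fin.rev i₃ then xx N i₁ i₃ * xx N (Fin.rev i₁) i₄ * xx N i₄ i₂ else 0)) := by
  rw [mul_assoc (xx N i₁ i₃), xx_comm i₂ i₄ i₃ i₁]
  simp only [mul_add, add_mul, mul_sub, sub_mul, mul_ite, ite_mul, mul_zero, zero_mul]
  noncomm_ring

lemma xx_sum_brak (a b : Fin N) :
    ∑ c : Fin N, (xx N c a * xx N b c - xx N b c * xx N c a)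
      = ((2:ℂ) - (N:ℂ)) • xx N b a := by
  have h1 : ∀ c : Fin N, xx N c a * xx N b c - xx N b c * xx N c a
      = UniversalEnvelopingAlgebra.ι ℂ ⁅soX N c a, soX N b c⁆ := by
    intro c
    rw [LieHom.map_lie, Ring.lie_def]
  simp only [h1]
  have h2 := map_sum ((UniversalEnvelopingAlgebra.ι ℂ (L := soL N)).toLinearMap)
      (fun c => ⁅soX N c a, soX N b c⁆) Finset.univ
  simp only [LieHom.coe_toLinearMap] at h2
  rw [← h2, sum_brak, map_smul]

end Main

set_option maxHeartbeats 2000000 in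
/-- The value of the 𝔰𝔬(N) weight system on the chord diagram with two crossing chords. -/
theorem wso_two_crossing_chords (N : ℕ) :
    (∑ i₁ : Fin N, ∑ i₂ : Fin N, ∑ i₃ : Fin N, ∑ i₄ : Fin N,
        UniversalEnvelopingAlgebra.ι ℂ (soX N i₁ i₃) *
          UniversalEnvelopingAlgebra.ι ℂ (soX N i₂ i₄) *
          UniversalEnvelopingAlgebra.ι ℂ (soX N i₃ i₁) *
          UniversalEnvelopingAlgebra.ι ℂ (soX N i₄ i₂)) =
      soC2 N ^ 2 - ((2 : ℂ) * (N : ℂ)) • soC2 N + (4 : ℂ) • soC2 N := by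
  show (∑ i₁ : Fin N, ∑ i₂ : Fin N, ∑ i₃ : Fin N, ∑ i₄ : Fin N,
      xx N i₁ i₃ * xx N i₂ i₄ * xx N i₃ i₁ * xx N i₄ i₂) = _
  -- Step 1: commute the middle two factors.
  have step1 : (∑ i₁ : Fin N, ∑ i₂ : Fin N, ∑ i₃ : Fin N, ∑ i₄ : Fin N,
      xx N i₁ i₃ * xx N i₂ i₄ * xx N i₃ i₁ * xx N i₄ i₂)
      = (∑ i₁ : Fin N, ∑ i₂ : Fin N, ∑ i₃ : Fin N, ∑ i₄ : Fin N,
          (xx N i₁ i₃ * xx N i₃ i₁) * (xx N i₂ i₄ * xx N i₄ i₂))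
        + ((∑ i₁ : Fin N, ∑ i₂ : Fin N, ∑ i₃ : Fin N, ∑ i₄ : Fin N,
            (if i₄ = i₃ then xx N i₁ i₃ * xx N i₂ i₁ * xx N i₄ i₂ else 0))
          - (∑ i₁ : Fin N, ∑ i₂ : Fin N, ∑ i₃ : Fin N, ∑ i₄ : Fin N,
            (if i₂ = i₁ then xx N i₁ i₃ * xx N i₃ i₄ * xx N i₄ i₂ else 0))
          - (∑ i₁ : Fin N, ∑ i₂ : Fin N, ∑ i₃ : Fin N, ∑ i₄ : Fin N,
            (if i₄ = Fin.rev i₁ then xx N i₁ i₃ * xx N i₂ (Fin.rev i₃) * xx N i₄ i₂ else 0))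
          + (∑ i₁ : Fin N, ∑ i₂ : Fin N, ∑ i₃ : Fin N, ∑ i₄ : Fin N,
            (if i₂ = Fin.rev i₃ then xx N i₁ i₃ * xx N (Fin.rev i₁) i₄ * xx N i₄ i₂ else 0))) := by
    simp only [xx_point, Finset.sum_add_distrib, Finset.sum_sub_distrib]
  rw [step1]
  -- Step 2: the first piece is C₂².
  have hP : (∑ i₁ : Fin N, ∑ i₂ : Fin N, ∑ i₃ : Fin N, ∑ i₄ : Fin N,
      (xx N i₁ i₃ * xx N i₃ i₁) * (xx N i₂ i₄ * xx N i₄ i₂)) = soC2 N ^ 2 := by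
    rw [sq, soC2, Finset.sum_mul_sum]
    refine Finset.sum_congr rfl fun i₁ _ => Finset.sum_congr rfl fun i₂ _ => ?_
    rw [Finset.sum_mul_sum]
  rw [hP]
  -- Step 3: collapse the four delta sums.
  have hT1 : (∑ i₁ : Fin N, ∑ i₂ : Fin N, ∑ i₃ : Fin N, ∑ i₄ : Fin N,
      (if i₄ = i₃ then xx N i₁ i₃ * xx N i₂ i₁ * xx N i₄ i₂ else 0))
      = ∑ i₁ : Fin N, ∑ i₂ : Fin N, ∑ i₃ : Fin N, xx N i₁ i₃ * xx N i₂ i₁ * xx N i₃ i₂ := by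
    simp [Finset.sum_ite_eq']
  have hT2 : (∑ i₁ : Fin N, ∑ i₂ : Fin N, ∑ i₃ : Fin N, ∑ i₄ : Fin N,
      (if i₂ = i₁ then xx N i₁ i₃ * xx N i₃ i₄ * xx N i₄ i₂ else 0))
      = ∑ i₁ : Fin N, ∑ i₃ : Fin N, ∑ i₄ : Fin N, xx N i₁ i₃ * xx N i₃ i₄ * xx N i₄ i₁ := by
    refine Finset.sum_congr rfl fun i₁ _ => ?_
    exact sum3_collapse (fun _ => i₁) _
  have hT3 : (∑ i₁ : Fin N, ∑ i₂ : Fin N, ∑ i₃ : Fin N, ∑ i₄ : Fin N,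
      (if i₄ = Fin.rev i₁ then xx N i₁ i₃ * xx N i₂ (Fin.rev i₃) * xx N i₄ i₂ else 0))
      = ∑ i₁ : Fin N, ∑ i₂ : Fin N, ∑ i₃ : Fin N,
          xx N i₁ i₃ * xx N i₂ (Fin.rev i₃) * xx N (Fin.rev i₁) i₂ := by
    simp [Finset.sum_ite_eq']
  have hT4 : (∑ i₁ : Fin N, ∑ i₂ : Fin N, ∑ i₃ : Fin N, ∑ i₄ : Fin N,
      (if i₂ = Fin.rev i₃ then xx N i₁ i₃ * xx N (Fin.rev i₁) i₄ * xx N i₄ i₂ else 0))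
      = ∑ i₁ : Fin N, ∑ i₃ : Fin N, ∑ i₄ : Fin N,
          xx N i₁ i₃ * xx N (Fin.rev i₁) i₄ * xx N i₄ (Fin.rev i₃) := by
    refine Finset.sum_congr rfl fun i₁ _ => ?_
    exact sum3_collapse Fin.rev _
  rw [hT1, hT2, hT3, hT4]
  -- Step 4: reindex the rev-sums.
  have hT3' : (∑ i₁ : Fin N, ∑ i₂ : Fin N, ∑ i₃ : Fin N,
      xx N i₁ i₃ * xx N i₂ (Fin.rev i₃) * xx N (Fin.rev i₁) i₂)
      = ∑ i₁ : Fin N, ∑ i₂ : Fin N, ∑ i₃ : Fin N,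
          xx N i₁ i₃ * xx N i₃ i₂ * xx N i₂ i₁ := by
    refine Finset.sum_congr rfl fun i₁ _ => ?_
    refine Fintype.sum_equiv Fin.revPerm _ _ fun i₂ => ?_
    refine Finset.sum_congr rfl fun i₃ _ => ?_
    show xx N i₁ i₃ * xx N i₂ (Fin.rev i₃) * xx N (Fin.rev i₁) i₂
      = xx N i₁ i₃ * xx N i₃ (Fin.rev i₂) * xx N (Fin.rev i₂) i₁
    rw [xx_rev1 i₃ i₂, xx_rev2 i₂ i₁]
    noncomm_ring
  have hT4' : (∑ i₁ : Fin N, ∑ i₃ : Fin N, ∑ i₄ : Fin N,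
      xx N i₁ i₃ * xx N (Fin.rev i₁) i₄ * xx N i₄ (Fin.rev i₃))
      = ∑ i₁ : Fin N, ∑ i₃ : Fin N, ∑ i₄ : Fin N,
          xx N i₁ i₃ * xx N i₄ i₁ * xx N i₃ i₄ := by
    refine Finset.sum_congr rfl fun i₁ _ => Finset.sum_congr rfl fun i₃ _ => ?_
    refine Fintype.sum_equiv Fin.revPerm _ _ fun i₄ => ?_
    show xx N i₁ i₃ * xx N (Fin.rev i₁) i₄ * xx N i₄ (Fin.rev i₃)
      = xx N i₁ i₃ * xx N (Fin.rev i₄) i₁ * xx N i₃ (Fin.rev i₄)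
    rw [xx_rev2 i₄ i₁, xx_rev1 i₃ i₄]
    noncomm_ring
  rw [hT3', hT4']
  -- Step 5: identify the remaining sums.
  have hC : (∑ i₁ : Fin N, ∑ i₂ : Fin N, ∑ i₃ : Fin N,
      xx N i₁ i₃ * xx N i₃ i₂ * xx N i₂ i₁)
      = ∑ i₁ : Fin N, ∑ i₃ : Fin N, ∑ i₄ : Fin N, xx N i₁ i₃ * xx N i₃ i₄ * xx N i₄ i₁ := by
    refine Finset.sum_congr rfl fun i₁ _ => ?_
    exact Finset.sum_comm
  have hD : (∑ i₁ : Fin N, ∑ i₂ : Fin N, ∑ i₃ : Fin N,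
      xx N i₁ i₃ * xx N i₂ i₁ * xx N i₃ i₂)
      = ∑ i₁ : Fin N, ∑ i₃ : Fin N, ∑ i₄ : Fin N, xx N i₁ i₃ * xx N i₄ i₁ * xx N i₃ i₄ := by
    refine Finset.sum_congr rfl fun i₁ _ => ?_
    exact Finset.sum_comm
  rw [hC, hD]
  -- Step 6: A - B = (2 - N) • C₂.
  have hAB : (∑ i₁ : Fin N, ∑ i₃ : Fin N, ∑ i₄ : Fin N, xx N i₁ i₃ * xx N i₄ i₁ * xx N i₃ i₄)
      - (∑ i₁ : Fin N, ∑ i₃ : Fin N, ∑ i₄ : Fin N, xx N i₁ i₃ * xx N i₃ i₄ * xx N i₄ i₁)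
      = ((2:ℂ) - (N:ℂ)) • soC2 N := by
    rw [← Finset.sum_sub_distrib]
    simp only [← Finset.sum_sub_distrib]
    have : ∀ a b : Fin N, (∑ c : Fin N,
        (xx N a b * xx N c a * xx N b c - xx N a b * xx N b c * xx N c a))
        = ((2:ℂ) - (N:ℂ)) • (xx N a b * xx N b a) := by
      intro a b
      have h : ∀ c : Fin N, xx N a b * xx N c a * xx N b c - xx N a b * xx N b c * xx N c a
          = xx N a b * (xx N c a * xx N b c - xx N b c * xx N c a) := by
        intro c; noncomm_ring
      simp only [h]
      rw [← Finset.mul_sum, xx_sum_brak, mul_smul_comm]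
    simp only [this]
    rw [soC2]
    simp only [Finset.smul_sum]
  rw [show (∑ i₁ : Fin N, ∑ i₃ : Fin N, ∑ i₄ : Fin N, xx N i₁ i₃ * xx N i₄ i₁ * xx N i₃ i₄)
      - (∑ i₁ : Fin N, ∑ i₃ : Fin N, ∑ i₄ : Fin N, xx N i₁ i₃ * xx N i₃ i₄ * xx N i₄ i₁)
      - (∑ i₁ : Fin N, ∑ i₃ : Fin N, ∑ i₄ : Fin N, xx N i₁ i₃ * xx N i₃ i₄ * xx N i₄ i₁)
      + (∑ i₁ : Fin N, ∑ i₃ : Fin N, ∑ i₄ : Fin N, xx N i₁ i₃ * xx N i₄ i₁ * xx N i₃ i₄)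
      = ((2:ℂ) - (N:ℂ)) • soC2 N + ((2:ℂ) - (N:ℂ)) • soC2 N from by rw [← hAB]; abel]
  module

end
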